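/- The p-difference operator in y applied s times to Ψ₁ gives D_{y,p}^s Ψ₁(q^a,p^b;p^c,q^d;q,p,x,y) = [(q^a;q)_s (p^b;p)_s / ((1−p)^s (p^c;p)_s)]·Ψ₁(q^{a+s},p^{b+s};p^{c+s},q^d;q,p,x,y). -/

import Mathlib

open scoped BigOperators
open Filter

/-- q-shifted factorial `(z;q)_k`. -/
noncomputable def qPoch (q z : ℂ) (k : ℕ) : ℂ :=
  ∏ r ∈ Finset.range k, (1 - z * q ^ r)

/-- infinite q-shifted factorial `(z;q)_∞`. -/
noncomputable def qPochInf (q z : ℂ) : ℂ := ∏' r : ℕ, (1 - z * q ^ r)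

/-- bibasic Humbert function `Ψ₁(A,B;C,D;q,p,x,y)` with `A=qᵃ, B=pᵇ, C=pᶜ, D=q^d`. -/
noncomputable def Psi1 (q p A B C D x y : ℂ) : ℂ :=
  ∑' kl : ℕ × ℕ,
    qPoch q A (kl.1 + kl.2) * qPoch p B kl.2 /
      (qPoch p C kl.2 * qPoch q D kl.1 * qPoch q q kl.1 * qPoch p p kl.2) *
      x ^ kl.1 * y ^ kl.2

/-- bibasic Humbert function `Ψ₂(A;B,C;q,p,x,y)` with `A=qᵃ, B=pᵇ, C=qᶜ`. -/
noncomputable def Psi2 (q p A B C x y : ℂ) : ℂ :=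
  ∑' kl : ℕ × ℕ,
    qPoch q A (kl.1 + kl.2) /
      (qPoch p B kl.2 * qPoch q C kl.1 * qPoch q q kl.1 * qPoch p p kl.2) *
      x ^ kl.1 * y ^ kl.2

/-- the q-difference operator `D_{x,q}`. -/
noncomputable def qDiff (q : ℂ) (f : ℂ → ℂ) : ℂ → ℂ :=
  fun x => (f x - f (q * x)) / ((1 - q) * x)

/-- basic hypergeometric series `₂φ₁(A,B;C;q,x)`. -/
noncomputable def phi21 (q A B C x : ℂ) : ℂ :=
  ∑' k : ℕ, qPoch q A k * qPoch q B k / (qPoch q C k * qPoch q q k) * x ^ k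

/-- basic confluent hypergeometric series `₁φ₁(A;C;q,z)`. -/
noncomputable def phi11 (q A C z : ℂ) : ℂ :=
  ∑' k : ℕ, qPoch q A k / (qPoch q C k * qPoch q q k) *
    (-1) ^ k * q ^ (k * (k - 1) / 2) * z ^ k

noncomputable def Complex.abs : AbsoluteValue ℂ ℝ := NormedField.toAbsoluteValue ℂ

lemma Complex.norm_eq_abs (z : ℂ) : ‖z‖ = Complex.abs z := rfl

lemma exp_neg_two_le_one_sub {t : ℝ} (h0 : 0 ≤ t) (h2 : t ≤ 1/2) :
    Real.exp (-(2*t)) ≤ 1 - t := by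
  have h1 : Real.exp (-(2*t)) * Real.exp (2*t) = 1 := by
    rw [← Real.exp_add]; simp
  nlinarith [Real.add_one_le_exp (2*t), Real.exp_pos (2*t), Real.exp_pos (-(2*t))]

lemma geom_partial_le {r : ℝ} (h0 : 0 ≤ r) (h1 : r < 1) (n : ℕ) :
    ∑ i ∈ Finset.range n, r ^ i ≤ (1 - r)⁻¹ := by
  have := Summable.sum_le_tsum (Finset.range n) (fun i _ => pow_nonneg h0 i)
    (summable_geometric_of_lt_one h0 h1)
  rwa [tsum_geometric_of_lt_one h0 h1] at this

lemma qPoch_lower {q : ℂ} (hq1 : Complex.abs q < 1) (D : ℂ) :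
    ∃ c : ℝ, 0 < c ∧ ∀ n, qPoch q D n ≠ 0 → c ≤ Complex.abs (qPoch q D n) := by
  have hq0 : (0:ℝ) ≤ Complex.abs q := Complex.abs.nonneg q
  have hDpos : (0:ℝ) < Complex.abs D + 1 := by positivity
  -- choose N with |D| * |q|^N ≤ 1/2
  obtain ⟨N, hN⟩ := exists_pow_lt_of_lt_one (show (0:ℝ) < 1/(2*(Complex.abs D + 1)) by positivity) hq1
  have hDN : Complex.abs D * Complex.abs q ^ N ≤ 1/2 := by
    have h1 : Complex.abs D * Complex.abs q ^ N ≤ (Complex.abs D + 1) * (1/(2*(Complex.abs D + 1))) := by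
      apply mul_le_mul (by linarith) hN.le (by positivity) (by positivity)
    rw [mul_one_div, mul_comm 2, div_mul_eq_div_div] at h1
    rw [div_self (ne_of_gt hDpos)] at h1
    linarith
  set g : ℕ → ℝ := fun r => if (1 - D * q ^ r) = 0 then 1
    else min (Complex.abs (1 - D * q ^ r)) 1 with hg
  have hgpos : ∀ r, 0 < g r := by
    intro r; simp only [hg]
    split
    · exact one_pos
    · exact lt_min (Complex.abs.pos (by assumption)) one_pos
  have hgone : ∀ r, g r ≤ 1 := by
    intro r; simp only [hg]; split
    · exact le_refl 1
    · exact min_le_right _ _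
  have hgle : ∀ r, (1 - D * q ^ r) ≠ 0 → g r ≤ Complex.abs (1 - D * q ^ r) := by
    intro r hr; simp only [hg, if_neg hr]; exact min_le_left _ _
  set E : ℝ := Real.exp (-(2 * (Complex.abs D * (1 - Complex.abs q)⁻¹))) with hE
  have hprodpos : 0 < ∏ r ∈ Finset.range N, g r := Finset.prod_pos fun r _ => hgpos r
  refine ⟨E * ∏ r ∈ Finset.range N, g r, mul_pos (Real.exp_pos _) hprodpos, ?_⟩
  intro n hn
  rw [qPoch, Finset.prod_ne_zero_iff] at hn
  have hfac : ∀ r < n, (1 - D * q ^ r) ≠ 0 := fun r hr => hn r (Finset.mem_range.2 hr)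
  rw [qPoch, map_prod]
  have hE1 : E ≤ 1 := by
    rw [hE]; apply Real.exp_le_one_iff.2
    have h4 : (0:ℝ) ≤ (1 - Complex.abs q)⁻¹ := inv_nonneg.2 (by linarith)
    have h5 := Complex.abs.nonneg D
    nlinarith
  rcases le_or_gt n N with hnN | hNn
  · -- n ≤ N
    have h1 : ∏ r ∈ Finset.range N, g r ≤ ∏ r ∈ Finset.range n, g r := by
      have : N = n + (N - n) := by omega
      rw [this, Finset.prod_range_add]
      have h2 : ∏ i ∈ Finset.range (N - n), g (n + i) ≤ 1 :=
        Finset.prod_le_one (fun i _ => (hgpos _).le) (fun i _ => hgone _)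
      have h3 : (0:ℝ) ≤ ∏ r ∈ Finset.range n, g r :=
        Finset.prod_nonneg fun r _ => (hgpos r).le
      exact le_trans (mul_le_mul_of_nonneg_left h2 h3) (le_of_eq (mul_one _))
    have h2 : ∏ r ∈ Finset.range n, g r ≤ ∏ r ∈ Finset.range n, Complex.abs (1 - D * q ^ r) :=
      Finset.prod_le_prod (fun r _ => (hgpos r).le)
        (fun r hr => hgle r (hfac r (Finset.mem_range.1 hr)))
    calc E * ∏ r ∈ Finset.range N, g r
        ≤ 1 * ∏ r ∈ Finset.range n, g r := by
          apply mul_le_mul hE1 h1 (Finset.prod_pos (fun r _ => hgpos r)).le one_pos.le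
      _ = ∏ r ∈ Finset.range n, g r := one_mul _
      _ ≤ _ := h2
  · -- N < n
    have hsplit : n = N + (n - N) := by omega
    rw [hsplit, Finset.prod_range_add]
    have h1 : ∏ r ∈ Finset.range N, g r ≤ ∏ r ∈ Finset.range N, Complex.abs (1 - D * q ^ r) :=
      Finset.prod_le_prod (fun r _ => (hgpos r).le)
        (fun r hr => hgle r (hfac r (lt_trans (Finset.mem_range.1 hr) hNn)))
    have h2 : E ≤ ∏ i ∈ Finset.range (n - N), Complex.abs (1 - D * q ^ (N + i)) := by
      have hterm : ∀ i, Real.exp (-(2 * (Complex.abs D * Complex.abs q ^ (N + i)))) ≤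
          Complex.abs (1 - D * q ^ (N + i)) := by
        intro i
        have hti : Complex.abs D * Complex.abs q ^ (N + i) ≤ 1/2 := by
          have : Complex.abs q ^ (N + i) ≤ Complex.abs q ^ N :=
            pow_le_pow_of_le_one hq0 hq1.le (by omega)
          nlinarith [Complex.abs.nonneg D]
        have hti0 : (0:ℝ) ≤ Complex.abs D * Complex.abs q ^ (N + i) := by positivity
        calc Real.exp (-(2 * (Complex.abs D * Complex.abs q ^ (N + i))))
            ≤ 1 - Complex.abs D * Complex.abs q ^ (N + i) := by
              have := exp_neg_two_le_one_sub hti0 hti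
              convert this using 2
          _ ≤ Complex.abs (1 - D * q ^ (N + i)) := by
              have := norm_sub_norm_le (1:ℂ) (D * q ^ (N + i))
              simp only [Complex.norm_eq_abs, map_one, map_mul, map_pow] at this
              linarith
      calc E ≤ Real.exp (∑ i ∈ Finset.range (n - N), -(2 * (Complex.abs D * Complex.abs q ^ (N + i)))) := by
            apply Real.exp_le_exp.2
            have hsum : ∑ i ∈ Finset.range (n-N), Complex.abs q ^ (N+i) ≤ (1-Complex.abs q)⁻¹ :=
              le_trans (Finset.sum_le_sum fun i _ => pow_le_pow_of_le_one hq0 hq1.le (by omega))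
                (geom_partial_le hq0 hq1 _)
            have heq : ∑ i ∈ Finset.range (n-N), -(2 * (Complex.abs D * Complex.abs q ^ (N+i)))
                = -(2 * (Complex.abs D * ∑ i ∈ Finset.range (n-N), Complex.abs q ^ (N+i))) := by
              simp [Finset.mul_sum]
            rw [heq]
            have := Complex.abs.nonneg D
            nlinarith
        _ = ∏ i ∈ Finset.range (n - N), Real.exp (-(2 * (Complex.abs D * Complex.abs q ^ (N + i)))) :=
            Real.exp_sum _ _
        _ ≤ _ := Finset.prod_le_prod (fun i _ => (Real.exp_pos _).le) (fun i _ => hterm i)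
    calc E * ∏ r ∈ Finset.range N, g r
        = (∏ r ∈ Finset.range N, g r) * E := mul_comm _ _
      _ ≤ (∏ r ∈ Finset.range N, Complex.abs (1 - D * q ^ r)) *
            ∏ i ∈ Finset.range (n - N), Complex.abs (1 - D * q ^ (N + i)) := by
          apply mul_le_mul h1 h2 (Real.exp_pos _).le (Finset.prod_nonneg (fun r _ => Complex.abs.nonneg _))
      _ = _ := rfl

lemma abs_qPoch_le {q : ℂ} (hq1 : Complex.abs q < 1) (A : ℂ) (n : ℕ) :
    Complex.abs (qPoch q A n) ≤ Real.exp (Complex.abs A * (1 - Complex.abs q)⁻¹) := by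
  have hq0 : (0:ℝ) ≤ Complex.abs q := Complex.abs.nonneg q
  rw [qPoch, map_prod]
  calc ∏ r ∈ Finset.range n, Complex.abs (1 - A * q ^ r)
      ≤ ∏ r ∈ Finset.range n, Real.exp (Complex.abs A * Complex.abs q ^ r) := by
        apply Finset.prod_le_prod (fun i _ => Complex.abs.nonneg _)
        intro i _
        calc Complex.abs (1 - A * q ^ i) ≤ Complex.abs 1 + Complex.abs (A * q ^ i) :=
              Complex.abs.sub_le_add 1 (A * q ^ i)
          _ = Complex.abs A * Complex.abs q ^ i + 1 := by
              simp [map_mul, map_pow]; ring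
          _ ≤ Real.exp (Complex.abs A * Complex.abs q ^ i) := Real.add_one_le_exp _
    _ = Real.exp (∑ r ∈ Finset.range n, Complex.abs A * Complex.abs q ^ r) :=
        (Real.exp_sum _ _).symm
    _ ≤ Real.exp (Complex.abs A * (1 - Complex.abs q)⁻¹) := by
        apply Real.exp_le_exp.2
        rw [← Finset.mul_sum]
        exact mul_le_mul_of_nonneg_left (geom_partial_le hq0 hq1 n) (Complex.abs.nonneg A)

lemma summable_psi1 {q p x y : ℂ} (hq1 : Complex.abs q < 1) (hp1 : Complex.abs p < 1)
    (hx : Complex.abs x < 1) (hy : Complex.abs y < 1) (A B C D : ℂ) :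
    Summable (fun kl : ℕ × ℕ =>
      qPoch q A (kl.1 + kl.2) * qPoch p B kl.2 /
        (qPoch p C kl.2 * qPoch q D kl.1 * qPoch q q kl.1 * qPoch p p kl.2) *
        x ^ kl.1 * y ^ kl.2) := by
  obtain ⟨cC, hcC, hC⟩ := qPoch_lower hp1 C
  obtain ⟨cD, hcD, hD⟩ := qPoch_lower hq1 D
  obtain ⟨cq, hcq, hqq⟩ := qPoch_lower hq1 q
  obtain ⟨cp, hcp, hpp⟩ := qPoch_lower hp1 p
  set MA := Real.exp (Complex.abs A * (1 - Complex.abs q)⁻¹) with hMA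
  set MB := Real.exp (Complex.abs B * (1 - Complex.abs p)⁻¹) with hMB
  set K := MA * MB / (cC * cD * cq * cp) with hK
  have hK0 : 0 ≤ K := by
    rw [hK, hMA, hMB]; positivity
  apply Summable.of_norm_bounded
    (g := fun kl : ℕ × ℕ => (K * Complex.abs x ^ kl.1) * (Complex.abs y ^ kl.2))
  · exact Summable.mul_of_nonneg
      ((summable_geometric_of_lt_one (Complex.abs.nonneg x) hx).mul_left K)
      (summable_geometric_of_lt_one (Complex.abs.nonneg y) hy)
      (fun k => mul_nonneg hK0 (pow_nonneg (Complex.abs.nonneg x) k))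
      (fun l => pow_nonneg (Complex.abs.nonneg y) l)
  · rintro ⟨k, l⟩
    simp only [Complex.norm_eq_abs, map_mul, map_div₀, map_pow]
    by_cases hz : qPoch p C l * qPoch q D k * qPoch q q k * qPoch p p l = 0
    · have hz0 : Complex.abs (qPoch p C l) * Complex.abs (qPoch q D k) *
          Complex.abs (qPoch q q k) * Complex.abs (qPoch p p l) = 0 := by
        rw [← map_mul, ← map_mul, ← map_mul, hz, map_zero]
      rw [hz0, div_zero, zero_mul, zero_mul]
      positivity
    · have h1 : qPoch p C l ≠ 0 := fun h => hz (by rw [h]; ring)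
      have h2 : qPoch q D k ≠ 0 := fun h => hz (by rw [h]; ring)
      have h3 : qPoch q q k ≠ 0 := fun h => hz (by rw [h]; ring)
      have h4 : qPoch p p l ≠ 0 := fun h => hz (by rw [h]; ring)
      have hnum : Complex.abs (qPoch q A (k + l)) * Complex.abs (qPoch p B l) ≤ MA * MB :=
        mul_le_mul (abs_qPoch_le hq1 A _) (abs_qPoch_le hp1 B _)
          (Complex.abs.nonneg _) (Real.exp_pos _).le
      have hden : cC * cD * cq * cp ≤
          Complex.abs (qPoch p C l) * Complex.abs (qPoch q D k) *
            Complex.abs (qPoch q q k) * Complex.abs (qPoch p p l) := by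
        apply mul_le_mul
        apply mul_le_mul
        apply mul_le_mul (hC l h1) (hD k h2) hcD.le (Complex.abs.nonneg _)
        exact hqq k h3
        exact hcq.le
        exact mul_nonneg (Complex.abs.nonneg _) (Complex.abs.nonneg _)
        exact hpp l h4
        exact hcp.le
        exact mul_nonneg (mul_nonneg (Complex.abs.nonneg _) (Complex.abs.nonneg _)) (Complex.abs.nonneg _)
      have hdiv : Complex.abs (qPoch q A (k + l)) * Complex.abs (qPoch p B l) /
          (Complex.abs (qPoch p C l) * Complex.abs (qPoch q D k) *
            Complex.abs (qPoch q q k) * Complex.abs (qPoch p p l)) ≤ K := by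
        rw [hK]
        apply div_le_div₀ (by rw [hMA, hMB]; positivity) hnum
          (by positivity) hden
      calc Complex.abs (qPoch q A (k + l)) * Complex.abs (qPoch p B l) /
            (Complex.abs (qPoch p C l) * Complex.abs (qPoch q D k) *
              Complex.abs (qPoch q q k) * Complex.abs (qPoch p p l)) *
            Complex.abs x ^ k * Complex.abs y ^ l
          ≤ K * Complex.abs x ^ k * Complex.abs y ^ l := by
            apply mul_le_mul_of_nonneg_right
              (mul_le_mul_of_nonneg_right hdiv (pow_nonneg (Complex.abs.nonneg x) k))
              (pow_nonneg (Complex.abs.nonneg y) l)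
        _ = K * Complex.abs x ^ k * Complex.abs y ^ l := rfl

lemma qPoch_succ (q z : ℂ) (n : ℕ) :
    qPoch q z (n + 1) = qPoch q z n * (1 - z * q ^ n) :=
  Finset.prod_range_succ _ _

lemma qPoch_succ' (q A : ℂ) (n : ℕ) :
    qPoch q A (n + 1) = (1 - A) * qPoch q (q * A) n := by
  rw [qPoch, Finset.prod_range_succ', qPoch]
  simp only [pow_zero, mul_one]
  rw [mul_comm]
  congr 1
  refine Finset.prod_congr rfl fun i _ => ?_
  ring

lemma one_sub_ne {p : ℂ} (h : Complex.abs p < 1) : (1:ℂ) - p ≠ 0 := by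
  intro h0
  have hp : p = 1 := by linear_combination -h0
  rw [hp] at h; simp at h

lemma one_sub_mul_pow_ne {p : ℂ} (h : Complex.abs p < 1) (m : ℕ) :
    (1:ℂ) - p * p ^ m ≠ 0 := by
  apply one_sub_ne
  rw [map_mul, map_pow]
  have h1 : Complex.abs p ^ m ≤ 1 := pow_le_one₀ (Complex.abs.nonneg p) h.le
  nlinarith [Complex.abs.nonneg p]

lemma term_alg {p y : ℂ} (m : ℕ) (hp : (1:ℂ) - p ≠ 0) (hS : (1:ℂ) - p * p ^ m ≠ 0)
    (hy : y ≠ 0) (a b c Pa Pb Pc Pd Pq Pp x : ℂ) :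
    (a * Pa * (b * Pb) / (c * Pc * Pd * Pq * (Pp * (1 - p * p ^ m))) * x * y ^ (m + 1)
      - a * Pa * (b * Pb) / (c * Pc * Pd * Pq * (Pp * (1 - p * p ^ m))) * x * (p * y) ^ (m + 1))
      / ((1 - p) * y)
    = a * b / ((1 - p) * c) * (Pa * Pb / (Pc * Pd * Pq * Pp) * x * y ^ m) := by
  by_cases hβ : c * Pc * Pd * Pq * Pp = 0
  · have hd0 : c * Pc * Pd * Pq * (Pp * (1 - p * p ^ m)) = 0 := by
      rw [show c * Pc * Pd * Pq * (Pp * (1 - p * p ^ m))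
          = c * Pc * Pd * Pq * Pp * (1 - p * p ^ m) from by ring, hβ, zero_mul]
    rw [hd0]
    simp only [div_zero, zero_mul, sub_zero, sub_self, zero_div]
    have hcase : c = 0 ∨ Pc * Pd * Pq * Pp = 0 := by
      have h' : c * (Pc * Pd * Pq * Pp) = 0 := by rw [← hβ]; ring
      exact mul_eq_zero.1 h'
    rcases hcase with h | h
    · rw [h, mul_zero, div_zero, zero_mul]
    · rw [h, div_zero, zero_mul, zero_mul, mul_zero]
  · have hc : c ≠ 0 := fun h => hβ (by rw [h]; ring)
    have hPc : Pc ≠ 0 := fun h => hβ (by rw [h]; ring)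
    have hPd : Pd ≠ 0 := fun h => hβ (by rw [h]; ring)
    have hPq : Pq ≠ 0 := fun h => hβ (by rw [h]; ring)
    have hPp : Pp ≠ 0 := fun h => hβ (by rw [h]; ring)
    field_simp
    ring

lemma psi1_step {q p x : ℂ} (hq1 : Complex.abs q < 1) (hp1 : Complex.abs p < 1)
    (hx : Complex.abs x < 1) (A B C D : ℂ) {y : ℂ} (hy0 : y ≠ 0)
    (hy : Complex.abs y < 1) :
    qDiff p (fun t => Psi1 q p A B C D x t) y
      = (1 - A) * (1 - B) / ((1 - p) * (1 - C)) * Psi1 q p (q*A) (p*B) (p*C) D x y := by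
  have hp : (1:ℂ) - p ≠ 0 := one_sub_ne hp1
  have hpy : Complex.abs (p * y) < 1 := by
    rw [map_mul]
    nlinarith [Complex.abs.nonneg p, Complex.abs.nonneg y]
  rw [qDiff]
  rw [Psi1, Psi1, Psi1,
    ← Summable.tsum_sub (summable_psi1 hq1 hp1 hx hy A B C D) (summable_psi1 hq1 hp1 hx hpy A B C D),
    ← tsum_div_const, ← tsum_mul_left]
  have hinj : Function.Injective (fun km : ℕ × ℕ => (km.1, km.2 + 1)) := by
    rintro ⟨k, m⟩ ⟨k', m'⟩ h
    simp only [Prod.mk.injEq] at h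
    exact Prod.ext h.1 (by omega)
  rw [← Function.Injective.tsum_eq hinj (f := fun kl : ℕ × ℕ =>
      (qPoch q A (kl.1 + kl.2) * qPoch p B kl.2 /
          (qPoch p C kl.2 * qPoch q D kl.1 * qPoch q q kl.1 * qPoch p p kl.2) *
          x ^ kl.1 * y ^ kl.2 -
        qPoch q A (kl.1 + kl.2) * qPoch p B kl.2 /
          (qPoch p C kl.2 * qPoch q D kl.1 * qPoch q q kl.1 * qPoch p p kl.2) *
          x ^ kl.1 * (p * y) ^ kl.2) / ((1 - p) * y)) ?_]
  · apply tsum_congr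
    rintro ⟨k, m⟩
    have e1 : qPoch q A (k + (m + 1)) = (1 - A) * qPoch q (q * A) (k + m) :=
      qPoch_succ' q A (k + m)
    show (qPoch q A (k + (m+1)) * qPoch p B (m+1) /
          (qPoch p C (m+1) * qPoch q D k * qPoch q q k * qPoch p p (m+1)) *
          x ^ k * y ^ (m+1) -
        qPoch q A (k + (m+1)) * qPoch p B (m+1) /
          (qPoch p C (m+1) * qPoch q D k * qPoch q q k * qPoch p p (m+1)) *
          x ^ k * (p * y) ^ (m+1)) / ((1 - p) * y) = _
    rw [e1, qPoch_succ' p B m, qPoch_succ' p C m, qPoch_succ p p m]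
    exact term_alg m hp (one_sub_mul_pow_ne hp1 m) hy0 (1-A) (1-B) (1-C) _ _ _ _ _ _ _
  · intro kl hkl
    rcases kl with ⟨k, l⟩
    rcases l with _ | m
    · exfalso
      apply hkl
      simp
    · exact ⟨(k, m), rfl⟩

lemma qDiff_iter_congr {p : ℂ} (hp0 : p ≠ 0) (hp1 : Complex.abs p < 1) :
    ∀ (s : ℕ) (g h : ℂ → ℂ), (∀ t, t ≠ 0 → Complex.abs t < 1 → g t = h t) →
      ∀ (y : ℂ), y ≠ 0 → Complex.abs y < 1 → (qDiff p)^[s] g y = (qDiff p)^[s] h y := by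
  intro s
  induction s with
  | zero => intro g h hgh y hy0 hy1; simpa using hgh y hy0 hy1
  | succ n ih =>
    intro g h hgh y hy0 hy1
    rw [Function.iterate_succ_apply, Function.iterate_succ_apply]
    refine ih _ _ (fun t ht0 ht1 => ?_) y hy0 hy1
    have hpt0 : p * t ≠ 0 := mul_ne_zero hp0 ht0
    have hpt1 : Complex.abs (p * t) < 1 := by
      rw [map_mul]
      nlinarith [Complex.abs.nonneg p, Complex.abs.nonneg t]
    rw [qDiff, qDiff, hgh t ht0 ht1, hgh (p * t) hpt0 hpt1]

lemma qDiff_iter_const_mul (p c : ℂ) :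
    ∀ (s : ℕ) (g : ℂ → ℂ) (y : ℂ),
      (qDiff p)^[s] (fun t => c * g t) y = c * (qDiff p)^[s] g y := by
  intro s
  induction s with
  | zero => intro g y; rfl
  | succ n ih =>
    intro g y
    rw [Function.iterate_succ_apply, Function.iterate_succ_apply]
    have hq : (qDiff p fun t => c * g t) = fun t => c * qDiff p g t := by
      funext t
      rw [qDiff, qDiff]
      ring
    rw [hq, ih]

lemma const_alg {p : ℂ} (hp : (1:ℂ) - p ≠ 0) (n : ℕ) (A B C Pa Pb Pc Ψ : ℂ) :
    (1-A)*(1-B)/((1-p)*(1-C)) * (Pa * Pb / ((1-p)^n * Pc) * Ψ)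
      = (1-A)*Pa*((1-B)*Pb) / ((1-p)^(n+1) * ((1-C)*Pc)) * Ψ := by
  by_cases hC : (1:ℂ) - C = 0
  · rw [hC]; simp
  · by_cases hPc : Pc = 0
    · rw [hPc]; simp
    · have hpow : ((1:ℂ)-p)^n ≠ 0 := pow_ne_zero _ hp
      field_simp
      ring

lemma psi1_iter {q p x : ℂ} (hq1 : Complex.abs q < 1) (hp0 : p ≠ 0)
    (hp1 : Complex.abs p < 1) (hx : Complex.abs x < 1) (D : ℂ) :
    ∀ (s : ℕ) (A B C : ℂ) (y : ℂ), y ≠ 0 → Complex.abs y < 1 →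
      (qDiff p)^[s] (fun t => Psi1 q p A B C D x t) y
        = qPoch q A s * qPoch p B s / ((1 - p) ^ s * qPoch p C s) *
            Psi1 q p (q ^ s * A) (p ^ s * B) (p ^ s * C) D x y := by
  intro s
  induction s with
  | zero =>
    intro A B C y hy0 hy1
    simp [qPoch]
  | succ n ih =>
    intro A B C y hy0 hy1
    rw [Function.iterate_succ_apply]
    rw [qDiff_iter_congr hp0 hp1 n (qDiff p fun t => Psi1 q p A B C D x t)
        (fun t => (1-A)*(1-B)/((1-p)*(1-C)) * Psi1 q p (q*A) (p*B) (p*C) D x t)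
        (fun t ht0 ht1 => psi1_step hq1 hp1 hx A B C D ht0 ht1) y hy0 hy1]
    rw [qDiff_iter_const_mul p _ n _ y, ih (q*A) (p*B) (p*C) y hy0 hy1]
    rw [qPoch_succ' q A n, qPoch_succ' p B n, qPoch_succ' p C n,
      show q^(n+1)*A = q^n*(q*A) from by ring,
      show p^(n+1)*B = p^n*(p*B) from by ring,
      show p^(n+1)*C = p^n*(p*C) from by ring]
    exact const_alg (one_sub_ne hp1) n A B C _ _ _ _

theorem stmt8 (q p a b c d x y : ℂ) (s : ℕ)
    (hq0 : 0 < ‖q‖) (hq1 : ‖q‖ < 1)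
    (hp0 : 0 < ‖p‖) (hp1 : ‖p‖ < 1)
    (hx : ‖x‖ < 1) (hy : ‖y‖ < 1) (hy0 : y ≠ 0) :
    (qDiff p)^[s] (fun t => Psi1 q p (q ^ a) (p ^ b) (p ^ c) (q ^ d) x t) y =
      qPoch q (q ^ a) s * qPoch p (p ^ b) s / ((1 - p) ^ s * qPoch p (p ^ c) s) *
        Psi1 q p (q ^ (a + (s : ℂ))) (p ^ (b + (s : ℂ))) (p ^ (c + (s : ℂ)))
          (q ^ d) x y := by
  have hqne : q ≠ 0 := by
    intro h; rw [h] at hq0; simp at hq0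
  have hpne : p ≠ 0 := by
    intro h; rw [h] at hp0; simp at hp0
  have eq1 : q ^ (a + (s : ℂ)) = q ^ s * q ^ a := by
    rw [Complex.cpow_add _ _ hqne, Complex.cpow_natCast, mul_comm]
  have eq2 : p ^ (b + (s : ℂ)) = p ^ s * p ^ b := by
    rw [Complex.cpow_add _ _ hpne, Complex.cpow_natCast, mul_comm]
  have eq3 : p ^ (c + (s : ℂ)) = p ^ s * p ^ c := by
    rw [Complex.cpow_add _ _ hpne, Complex.cpow_natCast, mul_comm]
  rw [eq1, eq2, eq3]
  exact psi1_iter hq1 hpne hp1 hx (q ^ d) s (q ^ a) (p ^ b) (p ^ c) y hy0 hy
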